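/- Let A be the adjacency matrix of a connected k-regular simple graph on n vertices and let λ ∉ {0, −1, k} be an eigenvalue of A of multiplicity n − d with d ≥ 2. If A has no eigenvalue equal to λ(2λ − 2k − λn)/(2λ − 2k + n), then n ≤ d(d−1)/2. -/

import Mathlib

open Matrix

section aux
variable {n : ℕ}

lemma vmv_addl (u u' v : Fin n → ℝ) :
    vecMulVec (u + u') v = vecMulVec u v + vecMulVec u' v := by
  ext i j; simp [vecMulVec_apply, add_mul]

lemma vmv_addr (u v v' : Fin n → ℝ) :
    vecMulVec u (v + v') = vecMulVec u v + vecMulVec u v' := by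
  ext i j; simp [vecMulVec_apply, mul_add]

lemma vmv_smull (a : ℝ) (u v : Fin n → ℝ) :
    vecMulVec (a • u) v = a • vecMulVec u v := by
  ext i j; simp [vecMulVec_apply, mul_assoc]

lemma vmv_smulr (a : ℝ) (u v : Fin n → ℝ) :
    vecMulVec u (a • v) = a • vecMulVec u v := by
  ext i j; simp [vecMulVec_apply]; ring

noncomputable def thetaMap (n : ℕ) (B : Matrix (Fin n) (Fin n) ℝ)
    (W : Submodule ℝ (Fin n → ℝ)) :
    ((Fin n → ℝ) × W) →ₗ[ℝ] Matrix (Fin n) (Fin n) ℝ where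
  toFun p := B * Matrix.diagonal p.1 * B
      + vecMulVec (p.2 : Fin n → ℝ) (fun _ => 1)
      + vecMulVec (fun _ => 1) (p.2 : Fin n → ℝ)
  map_add' p q := by
    have hd : Matrix.diagonal (p.1 + q.1) = Matrix.diagonal p.1 + Matrix.diagonal q.1 :=
      (Matrix.diagonal_add _ _).symm
    simp only [Prod.fst_add, Prod.snd_add, Submodule.coe_add, hd,
      mul_add, add_mul, vmv_addl, vmv_addr]
    abel
  map_smul' a p := by
    have hd : Matrix.diagonal (a • p.1) = a • Matrix.diagonal p.1 := Matrix.diagonal_smul _ _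
    simp only [Prod.smul_fst, Prod.smul_snd, SetLike.val_smul, hd,
      Matrix.mul_smul, Matrix.smul_mul, vmv_smull, vmv_smulr, RingHom.id_apply, smul_add]

lemma thetaMap_apply (B : Matrix (Fin n) (Fin n) ℝ) (W : Submodule ℝ (Fin n → ℝ))
    (p : (Fin n → ℝ) × W) (u v : Fin n) :
    thetaMap n B W p u v
      = (∑ i, B u i * p.1 i * B i v) + ((p.2 : Fin n → ℝ) u + (p.2 : Fin n → ℝ) v) := by
  have h1 : B * Matrix.diagonal p.1 = Matrix.of fun u i => B u i * p.1 i := by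
    ext a b; simp [Matrix.mul_diagonal]
  simp only [thetaMap, LinearMap.coe_mk, AddHom.coe_mk, Matrix.add_apply, h1,
    Matrix.mul_apply, Matrix.vecMulVec_apply, Matrix.of_apply, mul_one, one_mul]
  ring

end aux
set_option maxHeartbeats 1000000 in
/-- Let `A` be the adjacency matrix of a connected `k`-regular simple graph on `n` vertices,
`λ ∉ {0,−1,k}` an eigenvalue of `A` of multiplicity `n − d` with `d ≥ 2`. If `A` has no
eigenvalue `λ(2λ − 2k − λn)/(2λ − 2k + n)`, then `n ≤ d(d−1)/2`. -/
theorem stmt_15 (n k d : ℕ) (G : SimpleGraph (Fin n)) [DecidableRel G.Adj]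
    (hconn : G.Connected) (hreg : G.IsRegularOfDegree k)
    (lam : ℝ) (h0 : lam ≠ 0) (h1 : lam ≠ -1) (hk : lam ≠ k)
    (heig : Module.End.HasEigenvalue (Matrix.toLin' (G.adjMatrix ℝ)) lam)
    (hmult : Module.finrank ℝ
      (Module.End.eigenspace (Matrix.toLin' (G.adjMatrix ℝ)) lam) = n - d)
    (hdn : d ≤ n) (hd2 : 2 ≤ d)
    (hno : ¬ Module.End.HasEigenvalue (Matrix.toLin' (G.adjMatrix ℝ))
      (lam * (2 * lam - 2 * k - lam * n) / (2 * lam - 2 * k + n))) :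
    n ≤ d * (d - 1) / 2 := by
  classical
  have hn : 0 < n := Fin.pos_iff_nonempty.mpr hconn.nonempty
  set A : Matrix (Fin n) (Fin n) ℝ := G.adjMatrix ℝ with hA
  set B : Matrix (Fin n) (Fin n) ℝ := A - lam • 1 with hB
  set j : Fin n → ℝ := fun _ => 1 with hj
  have hklam : (k : ℝ) - lam ≠ 0 := sub_ne_zero.mpr (Ne.symm hk)
  have hnR : (n : ℝ) ≠ 0 := Nat.cast_ne_zero.mpr hn.ne'
  have hAs : ∀ u v, A u v = A v u := by
    intro u v; simp [hA, SimpleGraph.adjMatrix_apply, G.adj_comm]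
  have hBs : ∀ u v, B u v = B v u := by
    intro u v
    simp only [hB, Matrix.sub_apply, Matrix.smul_apply, hAs u v, Matrix.one_apply,
      smul_eq_mul]
    by_cases h : u = v <;> simp [h, eq_comm]
  -- entries of A are 0/1, idempotent, zero diagonal
  have hAsq : ∀ u v, A u v * A u v = A u v := by
    intro u v; by_cases h : G.Adj u v <;> simp [hA, h]
  have hAdiag : ∀ u, A u u = 0 := by intro u; simp [hA]
  have hBsq : ∀ u i, B u i * B i u = A u i + lam ^ 2 * (if u = i then 1 else 0) := by
    intro u i
    rw [← hBs u i]
    by_cases h : u = i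
    · subst h
      rw [if_pos rfl]
      simp only [hB, Matrix.sub_apply, Matrix.smul_apply, Matrix.one_apply_eq, smul_eq_mul,
        hAdiag u]
      ring
    · simp only [hB, Matrix.sub_apply, Matrix.smul_apply, Matrix.one_apply_ne h, smul_eq_mul,
        mul_zero, sub_zero, if_neg h, hAsq]
      ring
  -- row sums
  have hArow : ∀ u, ∑ v, A u v = (k : ℝ) := by
    intro u
    have h := SimpleGraph.adjMatrix_mulVec_const_apply_of_regular (α := ℝ) (a := (1:ℝ))
      hreg (v := u)
    simpa [Matrix.mulVec, dotProduct, hA] using h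
  have hAcol : ∀ v, ∑ u, A u v = (k : ℝ) := by
    intro v
    calc ∑ u, A u v = ∑ u, A v u := Finset.sum_congr rfl fun u _ => hAs u v
    _ = (k : ℝ) := hArow v
  have hBrow : ∀ u, ∑ v, B u v = (k : ℝ) - lam := by
    intro u
    simp only [hB, Matrix.sub_apply, Matrix.smul_apply, smul_eq_mul, Finset.sum_sub_distrib,
      hArow, ← Finset.mul_sum, Matrix.one_apply]
    simp
  have hBmv : ∀ y : Fin n → ℝ, B *ᵥ y = A *ᵥ y - lam • y := by
    intro y
    rw [hB, Matrix.sub_mulVec, Matrix.smul_mulVec, Matrix.one_mulVec]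
  have hAj : A *ᵥ j = (k : ℝ) • j := by
    funext u
    simpa [Matrix.mulVec, dotProduct, hj] using hArow u
  have hBj : B *ᵥ j = ((k : ℝ) - lam) • j := by
    rw [hBmv, hAj, sub_smul]
  -- kernel and range of B
  have hkerE : LinearMap.ker B.mulVecLin
      = Module.End.eigenspace (Matrix.toLin' (G.adjMatrix ℝ)) lam := by
    ext y
    rw [LinearMap.mem_ker, Module.End.mem_eigenspace_iff, Matrix.mulVecLin_apply,
      Matrix.toLin'_apply, hBmv, sub_eq_zero, ← hA]
  have hkerrank : Module.finrank ℝ (LinearMap.ker B.mulVecLin) = n - d := by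
    rw [hkerE]; exact hmult
  have hWrank : Module.finrank ℝ (LinearMap.range B.mulVecLin) = d := by
    have h1 := LinearMap.finrank_range_add_finrank_ker B.mulVecLin
    rw [hkerrank, Module.finrank_fin_fun] at h1
    omega
  set W : Submodule ℝ (Fin n → ℝ) := LinearMap.range B.mulVecLin with hWdef
  have hjW : j ∈ W := by
    refine ⟨((k:ℝ)-lam)⁻¹ • j, ?_⟩
    rw [B.mulVecLin.map_smul, Matrix.mulVecLin_apply, hBj, smul_smul,
      inv_mul_cancel₀ hklam, one_smul]
  have hcolW : ∀ i, (fun u => B u i) ∈ W := by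
    intro i
    refine ⟨Pi.single i 1, ?_⟩
    funext u
    simp [Matrix.mulVecLin_apply, Matrix.mulVec_single]
  have hmv : ∀ (M : Matrix (Fin n) (Fin n) ℝ) (y : Fin n → ℝ) (u : Fin n),
      (M *ᵥ y) u = ∑ i, M u i * y i := fun _ _ _ => rfl
  -- ## Core injectivity
  have hinj : ∀ (c x : Fin n → ℝ),
      (∀ u v, (∑ i, B u i * c i * B i v) + (x u + x v) = 0) → c = 0 ∧ x = 0 := by
    intro c x h
    have hD : ∀ u, (A *ᵥ c) u + lam ^ 2 * c u + 2 * x u = 0 := by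
      intro u
      have h2 : ∑ i, B u i * c i * B i u = (A *ᵥ c) u + lam ^ 2 * c u := by
        have e : ∀ i, B u i * c i * B i u
            = A u i * c i + lam ^ 2 * (if u = i then 1 else 0) * c i := by
          intro i
          rw [show B u i * c i * B i u = B u i * B i u * c i from by ring, hBsq u i]
          ring
        rw [Finset.sum_congr rfl fun i _ => e i, Finset.sum_add_distrib, hmv A c u]
        congr 1
        simp [mul_ite, ite_mul, Finset.sum_ite_eq]
      have h1 := h u u
      rw [h2] at h1
      linarith
    set s : ℝ := ∑ v, x v with hs
    have hT : ∀ u, ((k:ℝ) - lam) * (B *ᵥ c) u + n * x u + s = 0 := by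
      intro u
      have h1 : ∑ v, ((∑ i, B u i * c i * B i v) + (x u + x v)) = 0 := by
        simp only [h, Finset.sum_const_zero]
      rw [Finset.sum_add_distrib, Finset.sum_add_distrib] at h1
      have h2 : ∑ v, ∑ i, B u i * c i * B i v = ((k:ℝ) - lam) * (B *ᵥ c) u := by
        rw [Finset.sum_comm, hmv B c u, Finset.mul_sum]
        refine Finset.sum_congr rfl fun i _ => ?_
        rw [← Finset.mul_sum, hBrow i]
        ring
      rw [h2, Finset.sum_const, Finset.card_univ, Fintype.card_fin, nsmul_eq_mul] at h1
      linarith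
    have hmain : ∀ u, (2*lam - 2*(k:ℝ) + n) * (A *ᵥ c) u
        = (lam * (2*lam - 2*(k:ℝ) - lam * n)) * c u + 2 * s := by
      intro u
      have hd := hD u
      have ht := hT u
      have hb : (B *ᵥ c) u = (A *ᵥ c) u - lam * c u := by
        rw [hBmv]; simp
      rw [hb] at ht
      linear_combination (n:ℝ) * hd - 2 * ht
    -- c is a constant vector
    have hconst : ∃ t : ℝ, ∀ u, c u = t := by
      by_cases hg : (2*lam - 2*(k:ℝ) + n) = 0
      · have hnval : (n:ℝ) = 2*k - 2*lam := by linarith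
        have hdel : lam * (2*lam - 2*(k:ℝ) - lam * n) = 2*lam*(lam - k)*(1+lam) := by
          rw [hnval]; ring
        have hδ : lam * (2*lam - 2*(k:ℝ) - lam * n) ≠ 0 := by
          rw [hdel]
          refine mul_ne_zero (mul_ne_zero (mul_ne_zero two_ne_zero h0) ?_) ?_
          · intro hcon; apply hklam; linarith
          · intro hcon; apply h1; linarith
        refine ⟨-(2*s) / (lam * (2*lam - 2*(k:ℝ) - lam * n)), fun u => ?_⟩
        have := hmain u
        rw [hg, zero_mul] at this
        rw [eq_div_iff hδ]
        linarith
      · -- gamma ≠ 0 : use the forbidden eigenvalue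
        set t : ℝ := (∑ u, c u) / n with htdef
        set c0 : Fin n → ℝ := fun u => c u - t with hc0def
        have hsum0 : ∑ u, c0 u = 0 := by
          simp only [hc0def, Finset.sum_sub_distrib, Finset.sum_const, Finset.card_univ,
            Fintype.card_fin, nsmul_eq_mul, htdef]
          field_simp
          ring
        have hAc0 : ∀ u, (A *ᵥ c0) u = (A *ᵥ c) u - t * k := by
          intro u
          rw [hmv A c0 u, hmv A c u]
          simp only [hc0def, mul_sub, Finset.sum_sub_distrib, ← Finset.sum_mul, hArow u]
          ring
        have hACsum : ∑ u, (A *ᵥ c0) u = 0 := by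
          have : ∑ u, (A *ᵥ c0) u = ∑ i, ((∑ u, A u i) * c0 i) := by
            rw [Finset.sum_congr rfl fun u _ => hmv A c0 u, Finset.sum_comm]
            exact Finset.sum_congr rfl fun i _ => by rw [Finset.sum_mul]
          rw [this, Finset.sum_congr rfl fun i _ => by rw [hAcol i], ← Finset.mul_sum, hsum0,
            mul_zero]
        have hR : ∀ u, (2*lam - 2*(k:ℝ) + n) * (A *ᵥ c0) u
            = (lam * (2*lam - 2*(k:ℝ) - lam * n)) * c0 u
              + ((lam * (2*lam - 2*(k:ℝ) - lam * n)) * t + 2*s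
                - (2*lam - 2*(k:ℝ) + n) * (t * k)) := by
          intro u
          have e1 : (A *ᵥ c) u = (A *ᵥ c0) u + t * k := by
            have := hAc0 u; linarith
          have e2 : c u = c0 u + t := by simp [hc0def]
          linear_combination hmain u - (2*lam - 2*(k:ℝ) + n) * e1
            + (lam * (2*lam - 2*(k:ℝ) - lam * n)) * e2
        have hRsum : (lam * (2*lam - 2*(k:ℝ) - lam * n)) * t + 2*s
            - (2*lam - 2*(k:ℝ) + n) * (t * k) = 0 := by
          have h4 : ∑ u, ((2*lam - 2*(k:ℝ) + n) * (A *ᵥ c0) u)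
              = ∑ u, ((lam * (2*lam - 2*(k:ℝ) - lam * n)) * c0 u
                + ((lam * (2*lam - 2*(k:ℝ) - lam * n)) * t + 2*s
                  - (2*lam - 2*(k:ℝ) + n) * (t * k))) :=
            Finset.sum_congr rfl fun u _ => hR u
          rw [← Finset.mul_sum, hACsum, mul_zero, Finset.sum_add_distrib, ← Finset.mul_sum,
            hsum0, mul_zero, zero_add, Finset.sum_const, Finset.card_univ, Fintype.card_fin,
            nsmul_eq_mul] at h4
          have h5 := h4.symm
          rcases mul_eq_zero.mp h5 with h6 | h6
          · exact absurd h6 hnR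
          · exact h6
        have heq : ∀ u, (A *ᵥ c0) u
            = (lam * (2 * lam - 2 * (k:ℝ) - lam * n) / (2 * lam - 2 * (k:ℝ) + n)) * c0 u := by
          intro u
          have := hR u
          rw [hRsum, add_zero] at this
          rw [div_mul_eq_mul_div, eq_div_iff hg]
          linarith
        have hc00 : c0 = 0 := by
          by_contra hne
          apply hno
          refine Module.End.hasEigenvalue_of_hasEigenvector (x := c0) ⟨?_, hne⟩
          rw [Module.End.mem_eigenspace_iff]
          funext u
          rw [Matrix.toLin'_apply, Pi.smul_apply, smul_eq_mul]
          exact heq u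
        refine ⟨t, fun u => ?_⟩
        have : c0 u = 0 := by rw [hc00]; rfl
        simp only [hc0def] at this
        linarith
    obtain ⟨t, hct⟩ := hconst
    -- t must be 0
    have hAct : ∀ u, (A *ᵥ c) u = t * k := by
      intro u
      rw [hmv A c u, Finset.sum_congr rfl fun i _ => by rw [hct i], ← Finset.sum_mul, hArow u]
      ring
    have ht0 : t = 0 := by
      by_contra htne
      have hx : ∀ u, x u = -(t*((k:ℝ)+lam^2))/2 := by
        intro u
        have hd := hD u
        rw [hAct u, hct u] at hd
        field_simp
        linarith
      have hB2 : ∀ u v, (B * B) u v = (k:ℝ) + lam^2 := by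
        intro u v
        have h1 := h u v
        have e : ∑ i, B u i * c i * B i v = t * (B * B) u v := by
          rw [Matrix.mul_apply, Finset.mul_sum]
          exact Finset.sum_congr rfl fun i _ => by rw [hct i]; ring
        rw [e, hx u, hx v] at h1
        have h2 : t * (B * B) u v = t * ((k:ℝ) + lam^2) := by linarith
        exact mul_left_cancel₀ htne h2
      have hBsymM : Bᵀ = B := by
        ext u v; exact hBs v u
      have hkerB2 : LinearMap.ker (B*B).mulVecLin = LinearMap.ker B.mulVecLin := by
        ext y
        simp only [LinearMap.mem_ker, Matrix.mulVecLin_apply]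
        constructor
        · intro hy
          have h3 : B *ᵥ (B *ᵥ y) = 0 := by rw [Matrix.mulVec_mulVec]; exact hy
          have h2 : (B *ᵥ y) ⬝ᵥ (B *ᵥ y) = 0 := by
            rw [Matrix.dotProduct_mulVec]
            have h4 : (B *ᵥ y) ᵥ* B = B *ᵥ (B *ᵥ y) := by
              rw [← hBsymM, Matrix.vecMul_transpose, hBsymM]
            rw [h4, h3, zero_dotProduct]
          exact dotProduct_self_eq_zero.mp h2
        · intro hy
          rw [← Matrix.mulVec_mulVec, hy, Matrix.mulVec_zero]
      have hrank2 : Module.finrank ℝ (LinearMap.range (B*B).mulVecLin) = d := by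
        have h1 := LinearMap.finrank_range_add_finrank_ker (B*B).mulVecLin
        rw [hkerB2, hkerrank, Module.finrank_fin_fun] at h1
        omega
      have hjne : j ≠ 0 := by
        intro hcon
        have : (1:ℝ) = 0 := by
          have := congrFun hcon ⟨0, hn⟩
          simpa [hj] using this
        norm_num at this
      have hle1 : LinearMap.range (B*B).mulVecLin ≤ Submodule.span ℝ {j} := by
        rintro z ⟨y, rfl⟩
        have hz : (B*B).mulVecLin y = (((k:ℝ)+lam^2) * ∑ v, y v) • j := by
          funext u
          rw [Matrix.mulVecLin_apply, hmv (B*B) y u,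
            Finset.sum_congr rfl fun i _ => by rw [hB2 u i]]
          simp [hj, Finset.mul_sum]
        rw [hz]
        exact Submodule.smul_mem _ _ (Submodule.mem_span_singleton_self j)
      have hd1 : d ≤ 1 := by
        calc d = Module.finrank ℝ (LinearMap.range (B*B).mulVecLin) := hrank2.symm
        _ ≤ Module.finrank ℝ (Submodule.span ℝ ({j} : Set (Fin n → ℝ))) :=
            Submodule.finrank_mono hle1
        _ = 1 := finrank_span_singleton hjne
      omega
    have hc0 : c = 0 := funext fun u => by simp [hct u, ht0]
    refine ⟨hc0, funext fun u => ?_⟩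
    have hd := hD u
    rw [hc0] at hd
    simp only [Matrix.mulVec_zero, Pi.zero_apply, mul_zero, zero_add] at hd
    show x u = 0
    linarith
  -- ## The linear map into symmetric products and the dimension count
  have hThker : ∀ p : (Fin n → ℝ) × W, thetaMap n B W p = 0 → p = 0 := by
    rintro ⟨c, x, hxW⟩ hp
    have hentry : ∀ u v, (∑ i, B u i * c i * B i v) + (x u + x v) = 0 := by
      intro u v
      have h1 := congrFun (congrFun hp u) v
      rw [thetaMap_apply] at h1
      simpa using h1
    obtain ⟨hc, hx⟩ := hinj c x hentry
    rw [Prod.mk_eq_zero]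
    exact ⟨hc, Subtype.ext (by simpa using hx)⟩
  set genS : Set (Matrix (Fin n) (Fin n) ℝ) :=
    {M | ∃ u ∈ W, ∃ v ∈ W, M = vecMulVec u v + vecMulVec v u} with hgenS
  set V : Submodule ℝ (Matrix (Fin n) (Fin n) ℝ) := Submodule.span ℝ genS with hV
  have hmemV : ∀ p : (Fin n → ℝ) × W, thetaMap n B W p ∈ V := by
    rintro ⟨c, x, hxW⟩
    have hsplit : thetaMap n B W (c, ⟨x, hxW⟩)
        = (∑ i, c i • vecMulVec (fun u => B u i) (fun u => B u i))
          + (vecMulVec x j + vecMulVec j x) := by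
      ext u v
      rw [thetaMap_apply]
      simp only [Matrix.add_apply, Matrix.sum_apply, Matrix.smul_apply, vecMulVec_apply,
        smul_eq_mul, hj]
      rw [Finset.sum_congr rfl (fun i _ =>
        show B u i * c i * B i v = c i * (B u i * B v i) from by rw [hBs i v]; ring)]
      ring
    rw [hsplit]
    refine Submodule.add_mem _ (Submodule.sum_mem _ fun i _ => ?_)
      (Submodule.subset_span ⟨x, hxW, j, hjW, rfl⟩)
    have h2 : c i • vecMulVec (fun u => B u i) (fun u => B u i)
        = (c i / 2) • (vecMulVec (fun u => B u i) (fun u => B u i)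
          + vecMulVec (fun u => B u i) (fun u => B u i)) := by
      rw [smul_add, ← add_smul]
      norm_num
    rw [h2]
    exact Submodule.smul_mem _ _ (Submodule.subset_span ⟨_, hcolW i, _, hcolW i, rfl⟩)
  have hVle : Module.finrank ℝ V ≤ d * (d + 1) / 2 := by
    have bW : Module.Basis (Fin d) ℝ W := Module.finBasisOfFinrankEq ℝ W hWrank
    set bv : Fin d → (Fin n → ℝ) := fun i => ((bW i : W) : Fin n → ℝ) with hbv
    set symf : Sym2 (Fin d) → Matrix (Fin n) (Fin n) ℝ :=
      Sym2.lift ⟨fun i l => vecMulVec (bv i) (bv l) + vecMulVec (bv l) (bv i),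
        fun i l => add_comm _ _⟩ with hsymf
    set sfin : Finset (Matrix (Fin n) (Fin n) ℝ) := Finset.image symf Finset.univ with hsfin
    have hrepr : ∀ (u : Fin n → ℝ) (hu : u ∈ W) (p : Fin n),
        u p = ∑ i, bW.repr ⟨u, hu⟩ i * bv i p := by
      intro u hu p
      have h3 := bW.sum_repr ⟨u, hu⟩
      calc u p = ((⟨u, hu⟩ : W) : Fin n → ℝ) p := rfl
      _ = ((∑ i, bW.repr ⟨u, hu⟩ i • bW i : W) : Fin n → ℝ) p := by rw [h3]
      _ = ∑ i, bW.repr ⟨u, hu⟩ i * bv i p := by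
          rw [AddSubmonoidClass.coe_finset_sum, Finset.sum_apply]
          exact Finset.sum_congr rfl fun i _ => by simp [hbv]
    have hsub : genS ⊆ (Submodule.span ℝ (sfin : Set (Matrix (Fin n) (Fin n) ℝ)) : Set _) := by
      rintro M ⟨u, hu, v, hv, rfl⟩
      have hM : vecMulVec u v + vecMulVec v u
          = ∑ i, ∑ l, (bW.repr ⟨u, hu⟩ i * bW.repr ⟨v, hv⟩ l) •
              (vecMulVec (bv i) (bv l) + vecMulVec (bv l) (bv i)) := by
        ext p q
        simp only [Matrix.add_apply, vecMulVec_apply, Matrix.sum_apply, Matrix.smul_apply,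
          smul_eq_mul]
        have e1 : (∑ i, bW.repr ⟨u, hu⟩ i * bv i p) * (∑ l, bW.repr ⟨v, hv⟩ l * bv l q)
            = ∑ i, ∑ l, (bW.repr ⟨u, hu⟩ i * bW.repr ⟨v, hv⟩ l) * (bv i p * bv l q) := by
          rw [Finset.sum_mul_sum]
          exact Finset.sum_congr rfl fun i _ => Finset.sum_congr rfl fun l _ => by ring
        have e2 : (∑ i, bW.repr ⟨v, hv⟩ i * bv i p) * (∑ l, bW.repr ⟨u, hu⟩ l * bv l q)
            = ∑ i, ∑ l, (bW.repr ⟨u, hu⟩ i * bW.repr ⟨v, hv⟩ l) * (bv l p * bv i q) := by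
          rw [Finset.sum_mul_sum, Finset.sum_comm]
          exact Finset.sum_congr rfl fun i _ => Finset.sum_congr rfl fun l _ => by ring
        rw [hrepr u hu p, hrepr u hu q, hrepr v hv p, hrepr v hv q, e1, e2,
          ← Finset.sum_add_distrib]
        exact Finset.sum_congr rfl fun i _ => by
          rw [← Finset.sum_add_distrib]
          exact Finset.sum_congr rfl fun l _ => by rw [mul_add]
      rw [hM]
      refine Submodule.sum_mem _ fun i _ => Submodule.sum_mem _ fun l _ =>
        Submodule.smul_mem _ _ (Submodule.subset_span ?_)
      refine Finset.mem_coe.mpr (Finset.mem_image.mpr ⟨s(i, l), Finset.mem_univ _, ?_⟩)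
      simp [hsymf]
    have h1 : V ≤ Submodule.span ℝ (sfin : Set (Matrix (Fin n) (Fin n) ℝ)) :=
      Submodule.span_le.mpr hsub
    have h2 : Module.finrank ℝ V
        ≤ Module.finrank ℝ (Submodule.span ℝ (sfin : Set (Matrix (Fin n) (Fin n) ℝ))) :=
      Submodule.finrank_mono h1
    have h3 := finrank_span_finset_le_card (R := ℝ) sfin
    rw [Set.finrank] at h3
    have h4 : sfin.card ≤ Fintype.card (Sym2 (Fin d)) := by
      rw [hsfin]
      exact Finset.card_image_le.trans (by simp)
    have h5 : Fintype.card (Sym2 (Fin d)) = d * (d + 1) / 2 := by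
      rw [Sym2.card, Fintype.card_fin, Nat.choose_two_right]
      simp [Nat.mul_comm]
    omega
  have hcod : Function.Injective ((thetaMap n B W).codRestrict V hmemV) := by
    intro p q hpq
    have h1 : thetaMap n B W p = thetaMap n B W q := congrArg Subtype.val hpq
    have h2 : thetaMap n B W (p - q) = 0 := by rw [map_sub, h1, sub_self]
    exact sub_eq_zero.mp (hThker _ h2)
  have hfinle :=
    LinearMap.finrank_le_finrank_of_injective
      (f := (thetaMap n B W).codRestrict V hmemV) hcod
  rw [Module.finrank_prod, Module.finrank_fin_fun, hWrank] at hfinle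
  have hnd : n + d ≤ d * (d + 1) / 2 := hfinle.trans hVle
  have hsq : d * (d + 1) = d * d + d := by ring
  have hq : d * (d - 1) + d = d * d := by
    have hh : d - 1 + 1 = d := by omega
    calc d * (d - 1) + d = d * ((d - 1) + 1) := by ring
    _ = d * d := by rw [hh]
  omega
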